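/- Let p ≥ 1, let [ℓ_1,u_1),…,[ℓ_p,u_p) be nonempty half-open real intervals, let i ∈ {1,…,p} and j ∈ ℕ with i + j < p + 1, and let v be the (j+1)-th smallest element of the multiset {u_i, u_{i+1}, …, u_p}. Then every set S ⊆ ℝ for which the number of indices h with i ≤ h ≤ p and S ∩ [ℓ_h,u_h) = ∅ is at most j must contain an element s with s < v. (This is the claim in the proof of the recursion theorem that the minimum element s_1 of any optimal set satisfies s_1 < u_{α_i(j)}.) -/

import Mathlib

open Classical

/-- In the proof of the recursion theorem: if `v` is the `(j+1)`-th smallest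
element of the multiset `{u i, u (i+1), …, u p}` (counting multiplicity) and
`i + j < p + 1`, then every set `S ⊆ ℝ` missing at most `j` of the intervals
`[ℓ h, u h)` for `i ≤ h ≤ p` contains an element strictly below `v`. -/
theorem optimal_set_has_small_element
    (p : ℕ) (hp : 1 ≤ p) (ℓ u : ℕ → ℝ)
    (hne : ∀ h, 1 ≤ h → h ≤ p → ℓ h < u h)
    (i j : ℕ) (hi1 : 1 ≤ i) (hip : i ≤ p) (hij : i + j < p + 1)
    (v : ℝ)
    (hv : (Multiset.sort (Multiset.map u (Finset.Icc i p).val) (· ≤ ·))[j]? = some v) :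
    ∀ S : Set ℝ,
      ((Finset.Icc i p).filter
        (fun h => ∀ x ∈ S, x ∉ Set.Ico (ℓ h) (u h))).card ≤ j →
      ∃ x ∈ S, x < v := by
  intro S hS
  set M := Multiset.map u (Finset.Icc i p).val with hM
  set l := Multiset.sort M (· ≤ ·) with hl
  have hsorted : l.Pairwise (· ≤ ·) := Multiset.pairwise_sort _ _
  obtain ⟨hjlen, hvget⟩ := List.getElem?_eq_some_iff.mp hv
  -- every element of l.take (j+1) is ≤ v
  have htake : ∀ x ∈ l.take (j + 1), decide (x ≤ v) = true := by
    intro x hx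
    obtain ⟨k, hk, hkx⟩ := List.mem_iff_getElem.mp hx
    rw [List.getElem_take] at hkx
    have hklen : k < l.length := by
      have := hk; simp [List.length_take] at this; omega
    have hkj : k ≤ j := by
      have := hk; simp [List.length_take] at this; omega
    have : l[k] ≤ l[j] := by
      rcases lt_or_eq_of_le hkj with h | h
      · exact List.pairwise_iff_getElem.mp hsorted k j hklen hjlen h
      · subst h; exact le_rfl
    simpa [hkx, hvget] using this
  have hlenl : l.length = M.card := Multiset.length_sort _
  have hcardM : M.card = p - i + 1 := by
    simp [hM, Nat.card_Icc]
    omega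
  have hcount : j + 1 ≤ l.countP (fun x => decide (x ≤ v)) := by
    have h1 : (l.take (j + 1)).countP (fun x => decide (x ≤ v)) = (l.take (j+1)).length :=
      List.countP_eq_length.mpr htake
    have h2 : (l.take (j + 1)).countP (fun x => decide (x ≤ v)) ≤
        l.countP (fun x => decide (x ≤ v)) :=
      (List.take_sublist _ _).countP_le
    have h3 : (l.take (j+1)).length = j + 1 := by
      simp [List.length_take]; omega
    omega
  -- translate to finset filter cardinality
  have hcount' : j + 1 ≤ ((Finset.Icc i p).filter (fun h => u h ≤ v)).card := by
    have e1 : ((Finset.Icc i p).filter (fun h => u h ≤ v)).card =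
        Multiset.countP (fun h => u h ≤ v) (Finset.Icc i p).val := by
      rw [Finset.card_def, Finset.filter_val, ← Multiset.countP_eq_card_filter]
    have e2 : Multiset.countP (fun x => x ≤ v) M =
        Multiset.countP (fun h => u h ≤ v) (Finset.Icc i p).val := by
      rw [hM, Multiset.countP_map, Multiset.countP_eq_card_filter]
    have e3 : Multiset.countP (fun x => x ≤ v) M =
        l.countP (fun x => decide (x ≤ v)) := by
      have := Multiset.coe_countP (fun x => x ≤ v) (Multiset.sort M (· ≤ ·))
      rw [Multiset.sort_eq] at this
      exact this
    omega
  -- find an index h with u h ≤ v not missed by S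
  have hlt : ((Finset.Icc i p).filter
      (fun h => ∀ x ∈ S, x ∉ Set.Ico (ℓ h) (u h))).card <
      ((Finset.Icc i p).filter (fun h => u h ≤ v)).card := by omega
  have hns : ¬ ((Finset.Icc i p).filter (fun h => u h ≤ v)) ⊆
      ((Finset.Icc i p).filter (fun h => ∀ x ∈ S, x ∉ Set.Ico (ℓ h) (u h))) := by
    intro hsub
    exact absurd (Finset.card_le_card hsub) (by omega)
  obtain ⟨h, hmem, hnot⟩ := Finset.not_subset.mp hns
  rw [Finset.mem_filter] at hmem
  have hnot' : ¬ (∀ x ∈ S, x ∉ Set.Ico (ℓ h) (u h)) := by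
    intro hcon
    exact hnot (Finset.mem_filter.mpr ⟨hmem.1, hcon⟩)
  push_neg at hnot'
  obtain ⟨x, hxS, hxI⟩ := hnot'
  exact ⟨x, hxS, lt_of_lt_of_le hxI.2 hmem.2⟩
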